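/- Location property: for a knowledge base K and formula F, K ⊨ F if and only if δ_{L∖var(F)}[K] ⊨ F, where δ_{L∖var(F)} denotes the composition of forgetting operators for all variables not occurring in F. -/

import Mathlib

inductive Fm (V : Type) : Type
  | bot : Fm V
  | var : V → Fm V
  | not : Fm V → Fm V
  | and : Fm V → Fm V → Fm V
  | or  : Fm V → Fm V → Fm V
  | imp : Fm V → Fm V → Fm V
  | iff : Fm V → Fm V → Fm V

def Fm.eval {V : Type} (v : V → Bool) : Fm V → Bool
  | .bot => false
  | .var p => v p
  | .not F => !(F.eval v)
  | .and F G => F.eval v && G.eval v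
  | .or F G => F.eval v || G.eval v
  | .imp F G => !(F.eval v) || G.eval v
  | .iff F G => F.eval v == G.eval v

/-- The set of propositional variables occurring in a formula. -/
def Fm.vars {V : Type} : Fm V → Set V
  | .bot => ∅
  | .var q => {q}
  | .not F => F.vars
  | .and F G => F.vars ∪ G.vars
  | .or F G => F.vars ∪ G.vars
  | .imp F G => F.vars ∪ G.vars
  | .iff F G => F.vars ∪ G.vars

/-- Logical entailment `K ⊨ F`. -/
def Entails {V : Type} (K : Set (Fm V)) (F : Fm V) : Prop :=
  ∀ v : V → Bool, (∀ G ∈ K, G.eval v = true) → F.eval v = true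

/-- The canonical conservative retraction `[K, L∖{p}]`:
all formulas not containing `p` entailed by `K`. -/
def Retract {V : Type} (K : Set (Fm V)) (p : V) : Set (Fm V) :=
  {H | p ∉ H.vars ∧ Entails K H}

/-- `δ` is a forgetting operator for the variable `p`: its outputs avoid `p`, and
`δ F G` is logically equivalent to the canonical conservative retraction `[{F,G}, L∖{p}]`. -/
structure IsForgetting {V : Type} (p : V) (δ : Fm V → Fm V → Fm V) : Prop where
  avoid : ∀ F G, p ∉ (δ F G).vars
  equiv : ∀ F G (v : V → Bool),
    (δ F G).eval v = true ↔ ∀ H ∈ Retract ({F, G} : Set (Fm V)) p, H.eval v = true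

/-- Successive application of the forgetting operators of a list of variables. -/
def forgetList {V : Type} (δ : V → Fm V → Fm V → Fm V) : List V → Set (Fm V) → Set (Fm V)
  | [], K => K
  | p :: ps, K => forgetList δ ps (Set.image2 (δ p) K K)

lemma Fm.eval_congr {V : Type} {F : Fm V} {v w : V → Bool}
    (h : ∀ q ∈ F.vars, v q = w q) : F.eval v = F.eval w := by
  induction F with
  | bot => rfl
  | var q => exact h q rfl
  | not F ih => simp only [Fm.eval]; rw [ih h]
  | and F G ihF ihG =>
      simp only [Fm.eval]
      rw [ihF (fun q hq => h q (Or.inl hq)), ihG (fun q hq => h q (Or.inr hq))]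
  | or F G ihF ihG =>
      simp only [Fm.eval]
      rw [ihF (fun q hq => h q (Or.inl hq)), ihG (fun q hq => h q (Or.inr hq))]
  | imp F G ihF ihG =>
      simp only [Fm.eval]
      rw [ihF (fun q hq => h q (Or.inl hq)), ihG (fun q hq => h q (Or.inr hq))]
  | iff F G ihF ihG =>
      simp only [Fm.eval]
      rw [ihF (fun q hq => h q (Or.inl hq)), ihG (fun q hq => h q (Or.inr hq))]

/-- Conjunction of literals fixing the values of the variables in `l` to those given by `v`. -/
def bigConj {V : Type} (v : V → Bool) : List V → Fm V
  | [] => .not .bot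
  | q :: l => .and (if v q then .var q else .not (.var q)) (bigConj v l)

lemma bigConj_vars {V : Type} (v : V → Bool) (l : List V) :
    ∀ q ∈ (bigConj v l).vars, q ∈ l := by
  induction l with
  | nil => intro q hq; exact absurd hq (by simp [bigConj, Fm.vars])
  | cons a l ih =>
      intro q hq
      rcases hq with hq | hq
      · have : q = a := by
          by_cases hv : v a <;> simpa [hv, Fm.vars] using hq
        simp [this]
      · exact List.mem_cons_of_mem _ (ih q hq)

lemma bigConj_eval {V : Type} (v w : V → Bool) (l : List V) :
    (bigConj v l).eval w = true ↔ ∀ q ∈ l, w q = v q := by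
  induction l with
  | nil => simp [bigConj, Fm.eval]
  | cons a l ih =>
      simp only [bigConj, Fm.eval, Bool.and_eq_true, ih, List.mem_cons]
      constructor
      · rintro ⟨h1, h2⟩ q (rfl | hq)
        · by_cases hv : v q <;> simp [hv, Fm.eval] at h1 <;> simp [hv, h1]
        · exact h2 q hq
      · intro h
        refine ⟨?_, fun q hq => h q (Or.inr hq)⟩
        have := h a (Or.inl rfl)
        by_cases hv : v a <;> simp [hv, Fm.eval, this]

lemma retract_sem {V : Type} [Fintype V] [DecidableEq V] (K : Set (Fm V)) (p : V) (v : V → Bool) :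
    (∀ H ∈ Retract K p, H.eval v = true) ↔
      ∃ b, ∀ G ∈ K, G.eval (Function.update v p b) = true := by
  constructor
  · intro h
    by_contra hc
    push_neg at hc
    obtain ⟨G₁, hG₁, hG₁f⟩ := hc true
    obtain ⟨G₂, hG₂, hG₂f⟩ := hc false
    set χ : Fm V := bigConj v ((Finset.univ.erase p).toList) with hχ
    have hχp : p ∉ χ.vars := fun hp => by
      have := bigConj_vars v _ p hp
      simp at this
    have hχv : χ.eval v = true := (bigConj_eval v v _).2 (fun q _ => rfl)
    have hent : Entails K χ.not := by
      intro w hw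
      by_contra hne
      have hχw : χ.eval w = true := by
        simp only [Fm.eval, Bool.not_eq_true'] at hne
        simpa using hne
      have hwq : ∀ q, q ≠ p → w q = v q := by
        intro q hq
        exact (bigConj_eval v w _).1 hχw q (by simp [hq])
      have hweq : w = Function.update v p (w p) := by
        funext q
        by_cases hq : q = p
        · subst hq; simp
        · rw [Function.update_of_ne hq]; exact hwq q hq
      cases hwp : w p
      · exact absurd (hw G₂ hG₂) (by rw [hweq, hwp]; simp [hG₂f])
      · exact absurd (hw G₁ hG₁) (by rw [hweq, hwp]; simp [hG₁f])
    have := h χ.not ⟨hχp, hent⟩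
    simp only [Fm.eval, Bool.not_eq_true'] at this
    rw [hχv] at this
    exact absurd this (by simp)
  · rintro ⟨b, hb⟩ H ⟨hHp, hHe⟩
    have : H.eval v = H.eval (Function.update v p b) := by
      apply Fm.eval_congr
      intro q hq
      rw [Function.update_of_ne (fun h : q = p => hHp (h ▸ hq))]
    rw [this]
    exact hHe _ hb

lemma image2_sem {V : Type} [Fintype V] [DecidableEq V] {p : V} {δp : Fm V → Fm V → Fm V}
    (hδ : IsForgetting p δp) (K : Set (Fm V)) (v : V → Bool) :
    (∀ D ∈ Set.image2 δp K K, D.eval v = true) ↔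
      ∃ b, ∀ G ∈ K, G.eval (Function.update v p b) = true := by
  constructor
  · intro h
    by_contra hc
    push_neg at hc
    obtain ⟨G₁, hG₁, hG₁f⟩ := hc true
    obtain ⟨G₂, hG₂, hG₂f⟩ := hc false
    have hD : (δp G₁ G₂).eval v = true := h _ (Set.mem_image2_of_mem hG₁ hG₂)
    have := (retract_sem ({G₁, G₂} : Set (Fm V)) p v).1 ((hδ.equiv G₁ G₂ v).1 hD)
    obtain ⟨b, hb⟩ := this
    cases b
    · exact absurd (hb G₂ (by simp)) (by simp [hG₂f])
    · exact absurd (hb G₁ (by simp)) (by simp [hG₁f])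
  · rintro ⟨b, hb⟩ D hD
    obtain ⟨F', hF', G', hG', rfl⟩ := hD
    refine (hδ.equiv F' G' v).2 ?_
    refine (retract_sem ({F', G'} : Set (Fm V)) p v).2 ⟨b, ?_⟩
    rintro G (rfl | rfl)
    · exact hb _ hF'
    · exact hb _ hG'

lemma step_lemma {V : Type} [Fintype V] [DecidableEq V] {p : V} {δp : Fm V → Fm V → Fm V}
    (hδ : IsForgetting p δp) (K : Set (Fm V)) (F : Fm V) (hp : p ∉ F.vars) :
    Entails K F ↔ Entails (Set.image2 δp K K) F := by
  constructor
  · intro h v hv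
    obtain ⟨b, hb⟩ := (image2_sem hδ K v).1 hv
    have : F.eval v = F.eval (Function.update v p b) := by
      apply Fm.eval_congr
      intro q hq
      rw [Function.update_of_ne (fun h : q = p => hp (h ▸ hq))]
    rw [this]
    exact h _ hb
  · intro h v hv
    apply h
    refine (image2_sem hδ K v).2 ⟨v p, ?_⟩
    intro G hG
    rw [Function.update_eq_self]
    exact hv G hG

/-- Location property: `K ⊨ F` iff `δ_{L∖var(F)}[K] ⊨ F`. -/
theorem stmt11 {V : Type} [Fintype V] (δ : V → Fm V → Fm V → Fm V)
    (hδ : ∀ p : V, IsForgetting p (δ p)) (K : Set (Fm V)) (hK : K.Finite) (F : Fm V)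
    (l : List V) (hl : l.Nodup) (hvars : ∀ q : V, q ∈ l ↔ q ∉ F.vars) :
    Entails K F ↔ Entails (forgetList δ l K) F := by
  haveI := Classical.decEq V
  have hmem : ∀ q ∈ l, q ∉ F.vars := fun q hq => (hvars q).1 hq
  clear hvars hl hK
  induction l generalizing K with
  | nil => rfl
  | cons p ps ih =>
      rw [step_lemma (hδ p) K F (hmem p (List.mem_cons_self (a := p) (l := ps)))]
      exact ih _ (fun q hq => hmem q (List.mem_cons_of_mem _ hq))
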